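/- The non-archimedean field C, equipped with the real-valued valuation |z|_♭ = τ^{std(log|z|/log|t|)}, is spherically complete: every decreasing sequence of closed balls of positive radius in C has non-empty intersection. -/

import Mathlib

open Filter

noncomputable section

abbrev starC (𝒰 : Ultrafilter ℂ) : Type := Filter.Germ (𝒰 : Filter ℂ) ℂ
abbrev starR (𝒰 : Ultrafilter ℂ) : Type := Filter.Germ (𝒰 : Filter ℂ) ℝ

variable (𝒰 : Ultrafilter ℂ)

def tC : starC 𝒰 := ↑(fun s : ℂ => s)
def absG (z : starC 𝒰) : starR 𝒰 := z.map (fun w => ‖w‖)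
def tAbs : starR 𝒰 := absG 𝒰 (tC 𝒰)
def tBoundedC (a : starC 𝒰) : Prop := ∃ N : ℕ, 0 < N ∧ absG 𝒰 a ≤ (tAbs 𝒰)⁻¹ ^ N

/-- The germ `|t|^β ∈ *ℝ`, for a real exponent `β`. -/
def tpow (β : ℝ) : starR 𝒰 := ↑(fun s : ℂ => ‖s‖ ^ β)

/-- `|z|_♭ ≤ ρ`, where `|z|_♭ = τ^{std(log|z|/log|t|)}` is the non-archimedean absolute
value on `C` (an element of `C` being represented by a `t`-bounded germ `z ∈ *ℂ`):
equivalently, `|z| ≤ |t|^β` for every real `β` with `ρ < τ^β`. -/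
def flatLe (τ : ℝ) (z : starC 𝒰) (ρ : ℝ) : Prop :=
  ∀ β : ℝ, ρ < τ ^ β → absG 𝒰 z ≤ tpow 𝒰 β

/-- Characterization of `flatLe` for a germ given by an explicit representative. -/
lemma flatLe_coe_iff (τ : ℝ) (u : ℂ → ℂ) (ρ : ℝ) :
    flatLe 𝒰 τ (↑u) ρ ↔
      ∀ β : ℝ, ρ < τ ^ β → ∀ᶠ s in (𝒰 : Filter ℂ), ‖u s‖ ≤ ‖s‖ ^ β := by
  unfold flatLe
  constructor
  · intro h β hβ
    have := h β hβ
    exact Filter.Germ.coe_le.mp this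
  · intro h β hβ
    exact Filter.Germ.coe_le.mpr (h β hβ)

/-- The non-archimedean field `C` with the valuation `|z|_♭ = τ^{std(log|z|/log|t|)}` is
spherically complete: every decreasing sequence of closed balls of positive radius has
non-empty intersection.  Balls are given by centers `b n ∈ C` (represented by `t`-bounded
germs) and radii `r n ∈ ℝ_{>0}`, and the nesting hypothesis says that the ball
`B(b (n+1), r (n+1))` is contained in `B(b n, r n)`. -/
theorem stmt5 (hnp : ∀ z : ℂ, 𝒰 ≠ pure z) (h0 : (𝒰 : Filter ℂ) ≤ nhds 0)
    (τ : ℝ) (hτ : τ ∈ Set.Ioo (0 : ℝ) 1)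
    (b : ℕ → starC 𝒰) (hb : ∀ n, tBoundedC 𝒰 (b n))
    (r : ℕ → ℝ) (hr : ∀ n, 0 < r n)
    (hnest : ∀ n, ∀ z : starC 𝒰,
      flatLe 𝒰 τ (z - b (n + 1)) (r (n + 1)) → flatLe 𝒰 τ (z - b n) (r n)) :
    ∃ z : starC 𝒰, tBoundedC 𝒰 z ∧ ∀ n, flatLe 𝒰 τ (z - b n) (r n) := by
  classical
  obtain ⟨hτ0, hτ1⟩ := hτ
  -- enumeration of ℕ × ℚ
  set ν : ℕ → ℕ × ℚ := fun k => (Denumerable.eqv (ℕ × ℚ)).symm k with hνdef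
  have hν : Function.Surjective ν := (Denumerable.eqv (ℕ × ℚ)).symm.surjective
  -- representatives of the centers
  have hfex : ∀ n, ∃ g : ℂ → ℂ, (↑g : starC 𝒰) = b n := fun n => ⟨_, Quotient.out_eq _⟩
  choose f hf using hfex
  -- basic members of the ultrafilter
  have hne : {s : ℂ | s ≠ 0} ∈ 𝒰 := by
    have hm : {(0:ℂ)} ∉ (𝒰 : Filter ℂ) := fun hm =>
      hnp 0 (Ultrafilter.coe_injective (by
        rw [Ultrafilter.coe_pure]; exact 𝒰.neBot'.eq_pure_iff.mpr hm))
    exact (Ultrafilter.compl_mem_iff_notMem).mpr hm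
  have hball : ∀ k : ℕ, {s : ℂ | ‖s‖ < 1 / ((k : ℝ) + 1)} ∈ 𝒰 := by
    intro k
    have h1 : Metric.ball (0:ℂ) (1 / ((k : ℝ) + 1)) ∈ nhds (0:ℂ) :=
      Metric.ball_mem_nhds _ (by positivity)
    refine mem_of_superset (h0 h1) ?_
    intro s hs
    simpa [Complex.dist_eq] using hs
  -- flatLe between centers
  have hflat0 : ∀ m, flatLe 𝒰 τ (b m - b m) (r m) := by
    intro m
    rw [sub_self, show (0 : starC 𝒰) = ↑(fun _ : ℂ => (0:ℂ)) from rfl, flatLe_coe_iff]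
    intro β _
    filter_upwards with s
    simp [Real.rpow_nonneg]
  have hdown : ∀ m k, k ≤ m → flatLe 𝒰 τ (b m - b (m - k)) (r (m - k)) := by
    intro m k
    induction k with
    | zero => intro _; simpa using hflat0 m
    | succ k ih =>
      intro hk
      have h1 := ih (Nat.le_of_succ_le hk)
      have e : m - (k+1) + 1 = m - k := by omega
      rw [← e] at h1
      exact hnest _ _ h1
  have hle : ∀ n m, n ≤ m → flatLe 𝒰 τ (b m - b n) (r n) := by
    intro n m h
    have := hdown m (m - n) (Nat.sub_le m n)
    rwa [Nat.sub_sub_self h] at this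
  -- the countably many internal conditions
  set Cond : ℕ → ℂ → ℂ → Prop := fun j s w =>
    r (ν j).1 < τ ^ ((ν j).2 : ℝ) →
      ‖w - f (ν j).1 s‖ ≤ ‖s‖ ^ ((ν j).2 : ℝ) with hConddef
  set D : ℕ → Set ℂ := fun k =>
    {s | s ≠ 0 ∧ ‖s‖ < 1 / ((k : ℝ) + 1) ∧ ∃ w, ∀ j ≤ k, Cond j s w} with hDdef
  have hD : ∀ k, D k ∈ 𝒰 := by
    intro k
    set M := (Finset.range (k+1)).sup (fun j => (ν j).1) with hMdef
    have hwj : ∀ j ≤ k, ∀ᶠ s in (𝒰 : Filter ℂ), Cond j s (f M s) := by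
      intro j hj
      by_cases hq : r (ν j).1 < τ ^ ((ν j).2 : ℝ)
      · have hM : (ν j).1 ≤ M :=
          Finset.le_sup (f := fun j => (ν j).1) (Finset.mem_range.mpr (Nat.lt_succ_of_le hj))
        have h1 := hle (ν j).1 M hM
        rw [← hf M, ← hf (ν j).1] at h1
        rw [show ((↑(f M) : starC 𝒰) - ↑(f (ν j).1)) = ↑(fun s => f M s - f (ν j).1 s)
          from rfl, flatLe_coe_iff] at h1
        filter_upwards [h1 ((ν j).2 : ℝ) hq] with s hs
        intro _
        exact hs
      · filter_upwards with s h
        exact absurd h hq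
    have hw : ∀ᶠ s in (𝒰 : Filter ℂ), ∀ j ≤ k, Cond j s (f M s) := by
      have := (eventually_all_finset (Finset.range (k+1))
        (p := fun j s => Cond j s (f M s))).mpr
        (fun j hj => hwj j (Nat.lt_succ_iff.mp (Finset.mem_range.mp hj)))
      filter_upwards [this] with s hs j hj
      exact hs j (Finset.mem_range.mpr (Nat.lt_succ_of_le hj))
    filter_upwards [hne, hball k, hw] with s h1 h2 h3
    exact ⟨h1, h2, f M s, h3⟩
  set E : ℕ → Set ℂ := fun k => {s | ∀ j ≤ k, s ∈ D j} with hEdef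
  have hE : ∀ k, E k ∈ 𝒰 := by
    intro k
    have := (eventually_all_finset (Finset.range (k+1))
      (l := (𝒰 : Filter ℂ)) (p := fun j s => s ∈ D j)).mpr
      (fun j _ => hD j)
    filter_upwards [this] with s hs j hj
    exact hs j (Finset.mem_range.mpr (Nat.lt_succ_of_le hj))
  have hEex : ∀ s : ℂ, ∃ k, s ∉ E k := by
    intro s
    by_cases hs : s = 0
    · exact ⟨0, fun h => (h 0 le_rfl).1 hs⟩
    · have hpos : 0 < ‖s‖ := norm_pos_iff.mpr hs
      obtain ⟨k, hk⟩ := exists_nat_one_div_lt hpos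
      exact ⟨k, fun h => absurd (h k le_rfl).2.1 (not_lt.mpr hk.le)⟩
  have hKmem : ∀ s j, j < Nat.find (hEex s) → s ∈ E j := by
    intro s j hj
    by_contra h
    exact Nat.find_min (hEex s) hj h
  have spec : ∀ s, 0 < Nat.find (hEex s) →
      ∃ w, ∀ j ≤ Nat.find (hEex s) - 1, Cond j s w := by
    intro s hs
    have := hKmem s (Nat.find (hEex s) - 1) (by omega)
    exact (this (Nat.find (hEex s) - 1) le_rfl).2.2
  set z : ℂ → ℂ :=
    fun s => if hs : 0 < Nat.find (hEex s) then Classical.choose (spec s hs) else 0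
    with hzdef
  have hz : ∀ j, ∀ᶠ s in (𝒰 : Filter ℂ), Cond j s (z s) := by
    intro j
    filter_upwards [hE j] with s hs
    have hK : j < Nat.find (hEex s) := by
      by_contra h
      push_neg at h
      exact Nat.find_spec (hEex s) (fun i hi => hs i (le_trans hi h))
    have h0K : 0 < Nat.find (hEex s) := lt_of_le_of_lt (Nat.zero_le j) hK
    have hspec := Classical.choose_spec (spec s h0K) j (by omega)
    simp only [hzdef]
    rw [dif_pos h0K]
    exact hspec
  -- the germ z satisfies all the ball conditions
  have main : ∀ n, flatLe 𝒰 τ ((↑z : starC 𝒰) - b n) (r n) := by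
    intro n
    rw [← hf n, show ((↑z : starC 𝒰) - ↑(f n)) = ↑(fun s => z s - f n s) from rfl,
      flatLe_coe_iff]
    intro β hβ
    -- find a rational q > β with r n < τ ^ q
    have hcont : ContinuousAt (fun x : ℝ => τ ^ x) β :=
      Real.continuousAt_const_rpow (ne_of_gt hτ0)
    have hev : ∀ᶠ x in nhds β, r n < τ ^ x := hcont.eventually_mem
      (IsOpen.mem_nhds (isOpen_lt continuous_const continuous_id) hβ)
    obtain ⟨δ, hδ0, hδ⟩ := Metric.eventually_nhds_iff.mp hev
    obtain ⟨q, hq1, hq2⟩ := exists_rat_btwn (lt_add_of_pos_right β hδ0)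
    have hqcond : r n < τ ^ (q : ℝ) := hδ (by
      rw [Real.dist_eq, abs_of_pos (by linarith)]
      linarith)
    obtain ⟨j, hj⟩ := hν (n, q)
    have hc := hz j
    rw [hConddef] at hc
    simp only [hj] at hc
    filter_upwards [hc, hball 0, hne] with s h1 h2 h3
    have h1' := h1 hqcond
    have hpos : 0 < ‖s‖ := norm_pos_iff.mpr h3
    have habs1 : ‖s‖ ≤ 1 := by
      have : ((0:ℕ):ℝ) + 1 = 1 := by norm_num
      rw [this] at h2
      linarith [h2]
    calc ‖z s - f n s‖ ≤ ‖s‖ ^ ((q:ℝ)) := h1'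
      _ ≤ ‖s‖ ^ β :=
        Real.rpow_le_rpow_of_exponent_ge hpos habs1 hq1.le
  -- boundedness
  obtain ⟨N, hN0, hN⟩ := hb 0
  rw [← hf 0] at hN
  have htAbs : (tAbs 𝒰)⁻¹ ^ N = (↑(fun s : ℂ => (‖s‖)⁻¹ ^ N) : starR 𝒰) := by
    rw [show tAbs 𝒰 = (↑(fun s : ℂ => ‖s‖) : starR 𝒰) from rfl,
      ← Filter.Germ.coe_inv, ← Filter.Germ.coe_pow]
    rfl
  rw [htAbs] at hN
  have hN' : ∀ᶠ s in (𝒰 : Filter ℂ), ‖f 0 s‖ ≤ (‖s‖)⁻¹ ^ N :=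
    Filter.Germ.coe_le.mp hN
  set β₀ : ℝ := Real.logb τ (r 0) - 1 with hβ₀def
  have hβ₀ : r 0 < τ ^ β₀ := by
    rw [hβ₀def, Real.rpow_sub hτ0, Real.rpow_logb hτ0 (ne_of_lt hτ1) (hr 0), Real.rpow_one,
      lt_div_iff₀ hτ0]
    nlinarith [hr 0]
  have hz0 : ∀ᶠ s in (𝒰 : Filter ℂ),
      ‖z s - f 0 s‖ ≤ ‖s‖ ^ β₀ := by
    have := main 0
    rw [← hf 0, show ((↑z : starC 𝒰) - ↑(f 0)) = ↑(fun s => z s - f 0 s) from rfl,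
      flatLe_coe_iff] at this
    exact this β₀ hβ₀
  set M : ℕ := ⌈-β₀⌉₊ with hMdef
  have hMβ : -(M : ℝ) ≤ β₀ := by
    have := Nat.le_ceil (-β₀)
    linarith
  refine ⟨↑z, ⟨max M N + 1, Nat.succ_pos _, ?_⟩, main⟩
  have htAbs2 : (tAbs 𝒰)⁻¹ ^ (max M N + 1)
      = (↑(fun s : ℂ => (‖s‖)⁻¹ ^ (max M N + 1)) : starR 𝒰) := by
    rw [show tAbs 𝒰 = (↑(fun s : ℂ => ‖s‖) : starR 𝒰) from rfl,
      ← Filter.Germ.coe_inv, ← Filter.Germ.coe_pow]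
    rfl
  rw [htAbs2, show absG 𝒰 ↑z = (↑(fun s => ‖z s‖) : starR 𝒰) from rfl]
  refine Filter.Germ.coe_le.mpr ?_
  filter_upwards [hz0, hN', hball 1, hne] with s h1 h2 h3 h4
  set a := ‖s‖ with hadef
  have hpos : 0 < a := norm_pos_iff.mpr h4
  have ha2 : a < 1/2 := by
    have : ((1:ℕ):ℝ) + 1 = 2 := by norm_num
    rw [this] at h3
    exact h3
  have ha1 : a ≤ 1 := by linarith
  have hinv1 : 1 ≤ a⁻¹ := one_le_inv₀ hpos |>.mpr ha1
  have hinv2 : 2 ≤ a⁻¹ := by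
    rw [show (2:ℝ) = (1/2)⁻¹ by norm_num]
    exact inv_anti₀ hpos ha2.le
  have hstep1 : a ^ β₀ ≤ a⁻¹ ^ M := by
    have h5 : a ^ β₀ ≤ a ^ (-(M : ℝ)) :=
      Real.rpow_le_rpow_of_exponent_ge hpos ha1 hMβ
    have h6 : a ^ (-(M:ℝ)) = a⁻¹ ^ M := by
      rw [Real.rpow_neg hpos.le, Real.rpow_natCast, inv_pow]
    linarith [h5, h6.symm.le]
  have hb1 : a⁻¹ ^ M ≤ a⁻¹ ^ (max M N) := pow_le_pow_right₀ hinv1 (le_max_left _ _)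
  have hb2 : a⁻¹ ^ N ≤ a⁻¹ ^ (max M N) := pow_le_pow_right₀ hinv1 (le_max_right _ _)
  have htri : ‖z s‖ ≤ ‖z s - f 0 s‖ + ‖f 0 s‖ := by
    have := norm_add_le (z s - f 0 s) (f 0 s)
    simpa using this
  have hfin : a⁻¹ ^ (max M N + 1) = a⁻¹ * a⁻¹ ^ (max M N) := by ring
  have hppos : 0 ≤ a⁻¹ ^ (max M N) := by positivity
  calc ‖z s‖ ≤ ‖z s - f 0 s‖ + ‖f 0 s‖ := htri
    _ ≤ a ^ β₀ + a⁻¹ ^ N := add_le_add h1 h2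
    _ ≤ a⁻¹ ^ (max M N) + a⁻¹ ^ (max M N) := add_le_add (le_trans hstep1 hb1) hb2
    _ = 2 * a⁻¹ ^ (max M N) := by ring
    _ ≤ a⁻¹ * a⁻¹ ^ (max M N) := mul_le_mul_of_nonneg_right hinv2 hppos
    _ = a⁻¹ ^ (max M N + 1) := hfin.symm
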